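/- Suppose ρ, u, p : [0,L] → ℝ are differentiable with ρ > 0, u > 0, p > 0, and satisfy the one-dimensional Fanno system (ρu)' = 0, (ρu² + p)' = −μρu², and (ρ(u²/2 + γp/((γ−1)ρ))u)' = −μρu³, where the sound speed c = √(γp/ρ) satisfies u ≠ c everywhere. Then u' = μuM²/(1−M²), where M² = u²/c² = ρu²/(γp). -/

import Mathlib

theorem fanno_velocity_ode
    (γ μ L : ℝ) (hγ : 1 < γ) (hμ : 0 < μ)
    (ρ u p ρ' u' p' : ℝ → ℝ)
    (hρpos : ∀ x ∈ Set.Icc 0 L, 0 < ρ x)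
    (hupos : ∀ x ∈ Set.Icc 0 L, 0 < u x)
    (hppos : ∀ x ∈ Set.Icc 0 L, 0 < p x)
    (hρ : ∀ x ∈ Set.Icc 0 L, HasDerivAt ρ (ρ' x) x)
    (hu : ∀ x ∈ Set.Icc 0 L, HasDerivAt u (u' x) x)
    (hp : ∀ x ∈ Set.Icc 0 L, HasDerivAt p (p' x) x)
    (hM : ∀ x ∈ Set.Icc 0 L, ρ x * (u x) ^ 2 / (γ * p x) ≠ 1)
    (hmass : ∀ x ∈ Set.Icc 0 L, HasDerivAt (fun y => ρ y * u y) 0 x)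
    (hmom : ∀ x ∈ Set.Icc 0 L,
      HasDerivAt (fun y => ρ y * (u y) ^ 2 + p y) (-(μ * ρ x * (u x) ^ 2)) x)
    (hener : ∀ x ∈ Set.Icc 0 L,
      HasDerivAt (fun y => ρ y * ((u y) ^ 2 / 2 + γ * p y / ((γ - 1) * ρ y)) * u y)
        (-(μ * ρ x * (u x) ^ 3)) x) :
    ∀ x ∈ Set.Icc 0 L,
      u' x = μ * u x * (ρ x * (u x) ^ 2 / (γ * p x)) /
        (1 - ρ x * (u x) ^ 2 / (γ * p x)) := by
  intro x hx
  have hρx := hρpos x hx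
  have hux := hupos x hx
  have hpx := hppos x hx
  have hγ0 : (0:ℝ) < γ := lt_trans one_pos hγ
  have hγ1 : γ - 1 ≠ 0 := by linarith
  have hρne : ρ x ≠ 0 := ne_of_gt hρx
  have hden : (γ - 1) * ρ x ≠ 0 := mul_ne_zero hγ1 hρne
  have hγp : γ * p x ≠ 0 := by positivity
  -- mass equation
  have e1 : ρ' x * u x + ρ x * u' x = 0 :=
    ((hρ x hx).mul (hu x hx)).unique (hmass x hx)
  -- momentum equation
  have e2 : ρ' x * u x ^ 2 + ρ x * (2 * u x ^ 1 * u' x) + p' x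
      = -(μ * ρ x * u x ^ 2) :=
    (((hρ x hx).mul ((hu x hx).pow 2)).add (hp x hx)).unique (hmom x hx)
  -- energy equation
  have hinner : HasDerivAt (fun y => (u y) ^ 2 / 2 + γ * p y / ((γ - 1) * ρ y))
      (2 * u x ^ 1 * u' x / 2 +
        ((γ * p' x) * ((γ - 1) * ρ x) - (γ * p x) * ((γ - 1) * ρ' x)) /
          ((γ - 1) * ρ x) ^ 2) x := by
    exact (((hu x hx).pow 2).div_const 2).add
      (((hp x hx).const_mul γ).div ((hρ x hx).const_mul (γ - 1)) hden)
  have e3 : (ρ' x * ((u x) ^ 2 / 2 + γ * p x / ((γ - 1) * ρ x)) +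
        ρ x * (2 * u x ^ 1 * u' x / 2 +
          ((γ * p' x) * ((γ - 1) * ρ x) - (γ * p x) * ((γ - 1) * ρ' x)) /
            ((γ - 1) * ρ x) ^ 2)) * u x +
      ρ x * ((u x) ^ 2 / 2 + γ * p x / ((γ - 1) * ρ x)) * u' x
      = -(μ * ρ x * u x ^ 3) :=
    (((hρ x hx).mul hinner).mul (hu x hx)).unique (hener x hx)
  -- algebra
  have hM' : γ * p x - ρ x * u x ^ 2 ≠ 0 := by
    intro h
    exact hM x hx (by field_simp; linarith)
  simp only [pow_one] at e2 e3
  field_simp at e3 ⊢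
  rw [eq_div_iff (by intro h; apply hM'; linarith)]
  have hne : (8:ℝ) * (γ - 1) ^ 3 * (ρ x) ^ 4 ≠ 0 :=
    mul_ne_zero (mul_ne_zero (by norm_num) (pow_ne_zero _ hγ1)) (pow_ne_zero _ hρne)
  refine mul_left_cancel₀ hne ?_
  linear_combination (4 * (γ - 1) ^ 3 * (ρ x) ^ 3) * e3 + (4 * (γ - 1) ^ 3 * (ρ x) ^ 4 * (u x) ^ 2 * (γ + 1)) * e1
    - (8 * (γ - 1) ^ 3 * (ρ x) ^ 4 * γ * u x) * e2
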